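/- Let q ≥ 2, l ≥ q be integers and λ real. Let M be a matroid with no U_{2,l+2}-minor, e a non-loop of M with E(M) = A ∪ {e}, and suppose ε_M(A) > λ·q^{r(M)} but ε_M(A ∩ H) ≤ λ·q^{r_M(H)} for the hyperplane H containing e arising from a corank-2 flat W avoiding e. Then some hyperplane H' containing W but not e satisfies ε_M(A ∩ H') > (λ/l)·(q−1)·q^{r(M)−1}. -/

import Mathlib

open Matroid Set

/-- The rank of a set `X` in a matroid `M`: the supremum of sizes of independent subsets. -/
noncomputable def mrk {α : Type*} (M : Matroid α) (X : Set α) : ℕ :=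
  ⨆ I : {I : Set α // M.Indep I ∧ I ⊆ X}, I.1.ncard

/-- The rank of a matroid. -/
noncomputable def mrank {α : Type*} (M : Matroid α) : ℕ := mrk M M.E

/-- Deletion of a set from a matroid. -/
def mdelete {α : Type*} (M : Matroid α) (D : Set α) : Matroid α := M ↾ (M.E \ D)

/-- Contraction of a set in a matroid, via duality. -/
def mcontract {α : Type*} (M : Matroid α) (C : Set α) : Matroid α := (M✶ ↾ (M.E \ C))✶

/-- `eps M X` is the number of points (rank-1 flats) of the restriction `M ↾ X`. -/
noncomputable def eps {α : Type*} (M : Matroid α) (X : Set α) : ℕ :=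
  {P : Set α | (M ↾ X).IsFlat P ∧ mrk (M ↾ X) P = 1}.ncard

/-- `N` is isomorphic to the uniform matroid `U_{2,n}` (the `n`-point line). -/
def IsUnif2 {α : Type*} (N : Matroid α) (n : ℕ) : Prop :=
  N.E.Finite ∧ N.E.ncard = n ∧ ∀ I ⊆ N.E, (N.Indep I ↔ I.Finite ∧ I.ncard ≤ 2)

/-- `M` has a minor isomorphic to `U_{2,n}`. -/
def HasLineMinor {α : Type*} (M : Matroid α) (n : ℕ) : Prop :=
  ∃ C D : Set α, IsUnif2 (mdelete (mcontract M C) D) n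

/-- `M` is simple: every one- or two-element subset of the ground set is independent. -/
def MSimple {α : Type*} (M : Matroid α) : Prop :=
  ∀ e ∈ M.E, ∀ f ∈ M.E, M.Indep {e, f}

/-- `M` is round: the ground set admits no partition into two sets of smaller rank. -/
def Round {α : Type*} (M : Matroid α) : Prop :=
  ¬ ∃ A B : Set α, A ∪ B = M.E ∧ Disjoint A B ∧ mrk M A < mrank M ∧ mrk M B < mrank M

/-- `N` is isomorphic to the projective geometry `PG(n-1, F)`: its ground set is in
bijection with the rank-1 subspaces of `F^n` in such a way that independence corresponds to
linear independence. -/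
def IsProjGeom {α : Type*} (N : Matroid α) (n : ℕ) (F : Type*) [Field F] : Prop :=
  ∃ f : α → Submodule F (Fin n → F),
    Set.BijOn f N.E {W : Submodule F (Fin n → F) | Module.finrank F W = 1} ∧
    ∀ I ⊆ N.E, (N.Indep I ↔ I.Finite ∧ Module.finrank F ↥(⨆ x ∈ I, f x) = I.ncard)

namespace Aux18

variable {α : Type*} {M : Matroid α} {X Y I J W B F H K P : Set α} {x y e : α}

lemma ncard_le_of_indep_of_basis [M.Finite] (hI : M.IsBasis I X) (hJ : M.Indep J)
    (hJX : J ⊆ X) : J.ncard ≤ I.ncard := by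
  obtain ⟨I', hI', hJI'⟩ := hJ.subset_isBasis_of_subset hJX hI.subset_ground
  have hcard := hI'.encard_eq_encard hI
  have hfin : I'.Finite := M.set_finite I' hI'.indep.subset_ground
  calc J.ncard ≤ I'.ncard := ncard_le_ncard hJI' hfin
    _ = I.ncard := by rw [ncard_def, hcard, ← ncard_def]

lemma mrk_eq_of_basis [M.Finite] (hI : M.IsBasis I X) : mrk M X = I.ncard := by
  have hne : Nonempty {J : Set α // M.Indep J ∧ J ⊆ X} :=
    ⟨⟨∅, M.empty_indep, empty_subset X⟩⟩
  refine le_antisymm (ciSup_le fun J => ncard_le_of_indep_of_basis hI J.2.1 J.2.2) ?_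
  exact le_ciSup (f := fun J : {J : Set α // M.Indep J ∧ J ⊆ X} => J.1.ncard)
    ⟨I.ncard, by rintro n ⟨J, rfl⟩; exact ncard_le_of_indep_of_basis hI J.2.1 J.2.2⟩
    ⟨I, hI.indep, hI.subset⟩

lemma mrk_closure_eq [M.Finite] (hX : X ⊆ M.E) : mrk M (M.closure X) = mrk M X := by
  obtain ⟨I, hI⟩ := M.exists_isBasis X hX
  rw [mrk_eq_of_basis hI, mrk_eq_of_basis hI.isBasis_closure_right]

lemma mrk_mono [M.Finite] (hXY : X ⊆ Y) (hY : Y ⊆ M.E) : mrk M X ≤ mrk M Y := by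
  obtain ⟨I, hI⟩ := M.exists_isBasis X (hXY.trans hY)
  obtain ⟨J, hJ⟩ := M.exists_isBasis Y hY
  rw [mrk_eq_of_basis hI, mrk_eq_of_basis hJ]
  exact ncard_le_of_indep_of_basis hJ hI.indep (hI.subset.trans hXY)

lemma mrk_le_mrank [M.Finite] (hX : X ⊆ M.E) : mrk M X ≤ mrank M :=
  mrk_mono hX Subset.rfl

lemma mrk_insert_eq [M.Finite] (hX : X ⊆ M.E) (hx : x ∈ M.E) (hxcl : x ∉ M.closure X) :
    mrk M (insert x X) = mrk M X + 1 := by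
  obtain ⟨I, hI⟩ := M.exists_isBasis X hX
  have hclI : M.closure I = M.closure X := hI.closure_eq_closure
  have hxI : x ∉ I := fun h => hxcl (M.subset_closure X hX (hI.subset h))
  have hind : M.Indep (insert x I) := by
    rw [hI.indep.insert_indep_iff_of_notMem hxI, hclI]
    exact ⟨hx, hxcl⟩
  have hbas : M.IsBasis (insert x I) (insert x X) := by
    refine hind.isBasis_of_subset_of_subset_closure (insert_subset_insert hI.subset) ?_
    refine insert_subset (M.subset_closure _ hind.subset_ground (mem_insert _ _)) ?_
    refine (hI.subset_closure).trans (M.closure_subset_closure (subset_insert _ _))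
  rw [mrk_eq_of_basis hI, mrk_eq_of_basis hbas,
    ncard_insert_of_notMem hxI (M.set_finite I hI.indep.subset_ground)]

lemma closure_flat' (M : Matroid α) (X : Set α) : M.IsFlat (M.closure X) := by
  rw [Matroid.closure_def]
  have hne : Nonempty ↑{F : Set α | M.IsFlat F ∧ X ∩ M.E ⊆ F} :=
    ⟨⟨M.E, M.ground_isFlat, inter_subset_right⟩⟩
  rw [sInter_eq_iInter]
  exact Matroid.IsFlat.iInter fun F => F.2.1

lemma flat_eq_of_subset_of_mrk_le [M.Finite] (hF : M.IsFlat F) (hH : M.IsFlat H)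
    (hFH : F ⊆ H) (hle : mrk M H ≤ mrk M F) : F = H := by
  obtain ⟨I, hI⟩ := M.exists_isBasis F hF.subset_ground
  obtain ⟨J, hJ, hIJ⟩ := hI.indep.subset_isBasis_of_subset (hI.subset.trans hFH) hH.subset_ground
  have hJfin : J.Finite := M.set_finite J hJ.indep.subset_ground
  have hIJ' : I = J := by
    refine eq_of_subset_of_ncard_le hIJ ?_ hJfin
    rw [← mrk_eq_of_basis hI, ← mrk_eq_of_basis hJ]; exact hle
  have : H ⊆ M.closure I := hIJ' ▸ hJ.subset_closure
  refine subset_antisymm hFH (this.trans ?_)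
  rw [hI.closure_eq_closure, hF.closure]


lemma restrict_closure_eq' [M.Finite] (hX : X ⊆ M.E) (hYX : Y ⊆ X) :
    (M ↾ X).closure Y = M.closure Y ∩ X := by
  obtain ⟨I, hI⟩ := M.exists_isBasis Y (hYX.trans hX)
  have hIr : (M ↾ X).IsBasis I Y := hI.isBasis_restrict_of_subset hYX
  rw [← hIr.closure_eq_closure, ← hI.closure_eq_closure]
  ext f
  have hIX : I ⊆ X := hI.subset.trans hYX
  constructor
  · intro hf
    have hfX : f ∈ X := (M ↾ X).closure_subset_ground I hf
    rw [hIr.indep.mem_closure_iff'] at hf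
    refine ⟨?_, hfX⟩
    rw [hI.indep.mem_closure_iff']
    refine ⟨hX hfX, fun hind => hf.2 ?_⟩
    rw [restrict_indep_iff]
    exact ⟨hind, insert_subset hfX hIX⟩
  · rintro ⟨hf, hfX⟩
    rw [hI.indep.mem_closure_iff'] at hf
    rw [hIr.indep.mem_closure_iff']
    exact ⟨hfX, fun hind => hf.2 hind.1⟩

lemma mrk_restrict_eq [M.Finite] (hX : X ⊆ M.E) (hYX : Y ⊆ X) :
    mrk (M ↾ X) Y = mrk M Y := by
  haveI : (M ↾ X).Finite := restrict_finite (M.set_finite X hX)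
  obtain ⟨I, hI⟩ := M.exists_isBasis Y (hYX.trans hX)
  rw [mrk_eq_of_basis hI, mrk_eq_of_basis (hI.isBasis_restrict_of_subset hYX)]

/-- the forward point lemma -/
lemma point_exists [M.Finite] (hX : X ⊆ M.E)
    (hP : (M ↾ X).IsFlat P ∧ mrk (M ↾ X) P = 1) :
    ∃ x ∈ X, M.Indep {x} ∧ P = M.closure {x} ∩ X := by
  haveI : (M ↾ X).Finite := restrict_finite (M.set_finite X hX)
  have hPX : P ⊆ X := hP.1.subset_ground
  obtain ⟨I, hI⟩ := (M ↾ X).exists_isBasis P hPX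
  have hcard : I.ncard = 1 := by rw [← mrk_eq_of_basis hI, hP.2]
  obtain ⟨x, rfl⟩ := ncard_eq_one.mp hcard
  have hxX : x ∈ X := hPX (hI.subset rfl)
  have hind : M.Indep {x} := hI.indep.of_restrict
  refine ⟨x, hxX, hind, ?_⟩
  have h1 : (M ↾ X).closure {x} = P := by
    rw [hI.closure_eq_closure, hP.1.closure]
  rw [← h1, restrict_closure_eq' hX (singleton_subset_iff.mpr hxX)]

/-- the backward point lemma -/
lemma point_mk [M.Finite] (hX : X ⊆ M.E) (hxX : x ∈ X) (hind : M.Indep {x}) :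
    (M ↾ X).IsFlat (M.closure {x} ∩ X) ∧ mrk (M ↾ X) (M.closure {x} ∩ X) = 1 := by
  haveI : (M ↾ X).Finite := restrict_finite (M.set_finite X hX)
  have hxE : x ∈ M.E := hind.subset_ground rfl
  have hxcl : x ∈ M.closure {x} ∩ X := ⟨M.mem_closure_self x hxE, hxX⟩
  have hcc : M.closure (M.closure {x} ∩ X) = M.closure {x} := by
    refine subset_antisymm ?_ (M.closure_subset_closure (singleton_subset_iff.mpr hxcl))
    refine (M.closure_subset_closure inter_subset_left).trans ?_
    rw [Matroid.closure_closure]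
  have hflat : (M ↾ X).IsFlat (M.closure {x} ∩ X) := by
    have hrc : (M ↾ X).closure (M.closure {x} ∩ X) = M.closure {x} ∩ X := by
      rw [restrict_closure_eq' hX inter_subset_right, hcc]
    have := closure_flat' (M ↾ X) (M.closure {x} ∩ X)
    rwa [hrc] at this
  refine ⟨hflat, ?_⟩
  have hbas : M.IsBasis {x} (M.closure {x} ∩ X) :=
    hind.isBasis_of_subset_of_subset_closure (singleton_subset_iff.mpr hxcl) inter_subset_left
  rw [mrk_restrict_eq hX inter_subset_right, mrk_eq_of_basis hbas, ncard_singleton]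

section Hyp

variable [M.Finite]

/-- closure of W+x is a hyperplane through W containing x -/
lemma hyp_mk (hW : M.IsFlat W) (hrW : mrk M W + 2 = mrank M) (hxE : x ∈ M.E) (hxW : x ∉ W) :
    M.IsFlat (M.closure (insert x W)) ∧ mrk M (M.closure (insert x W)) + 1 = mrank M ∧
      W ⊆ M.closure (insert x W) ∧ x ∈ M.closure (insert x W) := by
  have hWE : W ⊆ M.E := hW.subset_ground
  have hxcl : x ∉ M.closure W := by rwa [hW.closure]
  have hiE : insert x W ⊆ M.E := insert_subset hxE hWE
  have hr : mrk M (M.closure (insert x W)) = mrk M W + 1 := by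
    rw [mrk_closure_eq hiE, mrk_insert_eq hWE hxE hxcl]
  refine ⟨closure_flat' M _, by omega, ?_, ?_⟩
  · exact (subset_insert x W).trans (M.subset_closure _ hiE)
  · exact M.subset_closure _ hiE (mem_insert x W)

/-- uniqueness of the hyperplane through W containing x -/
lemma hyp_unique (hW : M.IsFlat W) (hrW : mrk M W + 2 = mrank M) (hK : M.IsFlat K)
    (hrK : mrk M K + 1 = mrank M) (hWK : W ⊆ K) (hxK : x ∈ K) (hxW : x ∉ W) :
    K = M.closure (insert x W) := by
  have hxE : x ∈ M.E := hK.subset_ground hxK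
  obtain ⟨hF, hr, -, -⟩ := hyp_mk hW hrW hxE hxW
  have hsub : M.closure (insert x W) ⊆ K := by
    have : insert x W ⊆ K := insert_subset hxK hWK
    have := M.closure_subset_closure this
    rwa [hK.closure] at this
  exact (flat_eq_of_subset_of_mrk_le hF hK hsub (by omega)).symm

end Hyp

section Contract

lemma mcontract_ground (M : Matroid α) (C : Set α) : (mcontract M C).E = M.E \ C := rfl

/-- rank increment induction lemma -/
lemma mrk_union_of_forall [M.Finite] (hW : W ⊆ M.E) (hBfin : B.Finite) :
    B ⊆ M.E → (∀ x ∈ B, x ∉ M.closure (W ∪ (B \ {x}))) →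
    mrk M (W ∪ B) = mrk M W + B.ncard := by
  refine Set.Finite.induction_on (motive := fun B _ => B ⊆ M.E →
      (∀ x ∈ B, x ∉ M.closure (W ∪ (B \ {x}))) → mrk M (W ∪ B) = mrk M W + B.ncard)
      _ hBfin (by simp) ?_
  · intro a s ha hs ih hsub hnc
    have haE : a ∈ M.E := hsub (mem_insert _ _)
    have hsE : s ⊆ M.E := (subset_insert a s).trans hsub
    have hacl : a ∉ M.closure (W ∪ s) := by
      have := hnc a (mem_insert _ _)
      rwa [insert_diff_self_of_notMem ha] at this
    have ihh : mrk M (W ∪ s) = mrk M W + s.ncard := by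
      refine ih hsE fun x hx hxcl => hnc x (mem_insert_of_mem _ hx) ?_
      exact M.closure_subset_closure
        (union_subset_union_right _ (diff_subset_diff_left (subset_insert a s))) hxcl
    rw [union_insert, mrk_insert_eq (union_subset hW hsE) haE hacl, ihh,
      ncard_insert_of_notMem ha hs, add_assoc]

/-- contraction independence: sufficient condition -/
lemma mcontract_indep [M.Finite] (hJ : M.IsBasis J W) (hI : I ⊆ M.E) (hIW : Disjoint I W)
    (hJI : M.Indep (J ∪ I)) : (mcontract M W).Indep I := by
  have hWE : W ⊆ M.E := hJ.subset_ground
  obtain ⟨B', hB', hJIB'⟩ := hJI.exists_isBase_superset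
  have hB'E : B' ⊆ M.E := hB'.subset_ground
  set B : Set α := M.E \ (W ∪ B') with hBdef
  have hcompl : M.E \ B = W ∪ B' := diff_diff_cancel_left (union_subset hWE hB'E)
  have hBindep : M✶.Indep B := by
    rw [← coindep_def, coindep_iff_exists diff_subset]
    exact ⟨B', hB', by rw [hcompl]; exact subset_union_right⟩
  have hBsub : B ⊆ M.E \ W := diff_subset_diff_right subset_union_left
  have hJB' : J ⊆ B' := subset_union_left.trans hJIB'
  have hbasis : M✶.IsBasis B (M.E \ W) := by
    refine hBindep.isBasis_of_forall_insert hBsub fun f hf => ?_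
    have hfE : f ∈ M.E := hf.1.1
    have hfW : f ∉ W := hf.1.2
    have hfB' : f ∈ B' := by
      have := hf.2
      rw [hBdef, mem_diff, not_and, not_not] at this
      exact (this hfE).resolve_left hfW
    have hfJ : f ∉ J := fun h => hfW (hJ.subset h)
    rw [dep_iff]
    have hifB : insert f B ⊆ M.E := insert_subset hfE diff_subset
    refine ⟨fun hcoind => ?_, hifB⟩
    rw [← coindep_def, coindep_iff_exists hifB] at hcoind
    obtain ⟨B₂, hB₂, hB₂sub⟩ := hcoind
    have hdiffeq : M.E \ insert f B = (W ∪ B') \ {f} := by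
      rw [← union_singleton, ← diff_diff, hcompl]
    rw [hdiffeq] at hB₂sub
    have hfcl : f ∉ M.closure ((W ∪ B') \ {f}) := by
      intro hmem
      have hsub1 : (W ∪ B') \ {f} ⊆ M.closure (B' \ {f}) := by
        rintro z ⟨hz, hzf⟩
        rcases hz with hzW | hzB'
        · exact M.closure_subset_closure (show J ⊆ B' \ {f} from
            subset_diff_singleton hJB' hfJ) (hJ.subset_closure hzW)
        · exact M.subset_closure _ ((diff_subset.trans hB'E)) ⟨hzB', hzf⟩
      have h2 : M.closure ((W ∪ B') \ {f}) ⊆ M.closure (B' \ {f}) :=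
        closure_subset_closure_of_subset_closure hsub1
      exact hB'.indep.notMem_closure_diff_of_mem hfB' (h2 hmem)
    have : f ∈ M.closure ((W ∪ B') \ {f}) := by
      have h3 : M.closure B₂ ⊆ M.closure ((W ∪ B') \ {f}) := M.closure_subset_closure hB₂sub
      rw [hB₂.closure_eq] at h3
      exact h3 hfE
    exact hfcl this
  rw [mcontract, dual_indep_iff_exists']
  have hIE : I ⊆ M.E \ W := subset_diff.mpr ⟨hI, hIW⟩
  refine ⟨hIE, B, ?_, ?_⟩
  · rwa [isBase_restrict_iff (show M.E \ W ⊆ M✶.E from diff_subset)]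
  · have hIB' : I ⊆ W ∪ B' := (subset_union_right.trans hJIB').trans subset_union_right
    rw [hBdef]
    exact Disjoint.mono_left hIB' disjoint_sdiff_right

/-- contraction independence: rank bound -/
lemma mcontract_indep_bound [M.Finite] (hW : W ⊆ M.E)
    (hI : (mcontract M W).Indep I) : mrk M W + I.ncard ≤ mrank M := by
  obtain ⟨BN, hBN, hIBN⟩ := hI.exists_isBase_superset
  have hBNsub : BN ⊆ M.E \ W := hBN.subset_ground
  have hBNE : BN ⊆ M.E := hBNsub.trans diff_subset
  set K : Set α := (M.E \ W) \ BN with hKdef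
  have hbase : (M✶ ↾ (M.E \ W)).IsBase K := by
    rw [mcontract] at hBN
    exact (dual_isBase_iff (show BN ⊆ (M✶ ↾ (M.E \ W)).E from hBNsub)).mp hBN
  have hK : M✶.IsBasis K (M.E \ W) :=
    (isBase_restrict_iff (show M.E \ W ⊆ M✶.E from diff_subset)).mp hbase
  have hcompl : M.E \ K = W ∪ BN := by
    rw [hKdef, diff_diff_right, diff_diff_cancel_left hW,
      inter_eq_self_of_subset_right hBNE, union_comm]
  obtain ⟨B₀, hB₀, hB₀sub⟩ := (coindep_iff_exists (show K ⊆ M.E from diff_subset.trans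
    diff_subset)).mp (coindep_def.mpr hK.indep)
  rw [hcompl] at hB₀sub
  have hspan : M.closure (W ∪ BN) = M.E := by
    refine subset_antisymm (M.closure_subset_ground _) ?_
    rw [← hB₀.closure_eq]
    exact M.closure_subset_closure hB₀sub
  have hnc : ∀ f ∈ BN, f ∉ M.closure (W ∪ (BN \ {f})) := by
    intro f hf hfcl
    have hfW : f ∉ W := (hBNsub hf).2
    have hins : insert f (W ∪ (BN \ {f})) = W ∪ BN := by
      rw [union_comm W, ← insert_union, insert_diff_singleton, insert_eq_of_mem hf, union_comm]
    have hcleq : M.closure (W ∪ (BN \ {f})) = M.E := by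
      have := closure_insert_eq_of_mem_closure hfcl
      rw [hins, hspan] at this
      exact this.symm
    have hsubE : W ∪ (BN \ {f}) ⊆ M.E := union_subset hW ((diff_subset).trans hBNE)
    obtain ⟨I₂, hI₂⟩ := M.exists_isBasis (W ∪ (BN \ {f})) hsubE
    have hI₂base : M.IsBase I₂ := hI₂.indep.isBase_of_ground_subset_closure
      (by rw [hI₂.closure_eq_closure, hcleq])
    have hKfsub : insert f K ⊆ M.E := insert_subset (hBNE hf) (diff_subset.trans diff_subset)
    have hdiffeq : M.E \ insert f K = W ∪ (BN \ {f}) := by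
      rw [← union_singleton, ← diff_diff, hcompl, union_diff_distrib,
        diff_singleton_eq_self hfW]
    have hcoind : M✶.Indep (insert f K) := by
      rw [← coindep_def, coindep_iff_exists hKfsub, hdiffeq]
      exact ⟨I₂, hI₂base, hI₂.subset⟩
    have hfmem : f ∈ (M.E \ W) \ K := ⟨hBNsub hf, fun h => h.2 hf⟩
    exact (hK.insert_dep hfmem).not_indep hcoind
  have hBNfin : BN.Finite := M.set_finite BN hBNE
  have hkey : mrk M (W ∪ BN) = mrk M W + BN.ncard :=
    mrk_union_of_forall hW hBNfin hBNE hnc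
  have hrank : mrank M = mrk M (W ∪ BN) := by
    rw [mrank, ← hspan, mrk_closure_eq (union_subset hW hBNE)]
  have hle : I.ncard ≤ BN.ncard := ncard_le_ncard hIBN hBNfin
  omega

end Contract

section Count

variable [M.Finite]

lemma hyps_ncard_le {l : ℕ} (hminor : ¬ HasLineMinor M (l + 2))
    (hW : M.IsFlat W) (hrW : mrk M W + 2 = mrank M)
    (hH : M.IsFlat H) (hrH : mrk M H + 1 = mrank M) (hWH : W ⊆ H) :
    {K | M.IsFlat K ∧ mrk M K + 1 = mrank M ∧ W ⊆ K ∧ K ≠ H}.ncard ≤ l := by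
  classical
  set 𝒦 : Set (Set α) := {K | M.IsFlat K ∧ mrk M K + 1 = mrank M ∧ W ⊆ K ∧ K ≠ H} with h𝒦def
  have h𝒦fin : 𝒦.Finite :=
    M.ground_finite.finite_subsets.subset fun K hK => hK.1.subset_ground
  by_contra hcon
  push_neg at hcon
  obtain ⟨𝒦₀, h𝒦₀sub, h𝒦₀card⟩ := Set.exists_subset_card_eq (show l + 1 ≤ 𝒦.ncard by omega)
  have h𝒦₀fin : 𝒦₀.Finite := h𝒦fin.subset h𝒦₀sub
  set ℋ : Set (Set α) := insert H 𝒦₀ with hℋdef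
  have hHnot : H ∉ 𝒦₀ := fun h => (h𝒦₀sub h).2.2.2 rfl
  have hℋfin : ℋ.Finite := h𝒦₀fin.insert H
  have hℋcard : ℋ.ncard = l + 2 := by
    rw [hℋdef, ncard_insert_of_notMem hHnot h𝒦₀fin, h𝒦₀card]
  have hhyp : ∀ K ∈ ℋ, M.IsFlat K ∧ mrk M K + 1 = mrank M ∧ W ⊆ K := by
    rintro K (rfl | hK)
    · exact ⟨hH, hrH, hWH⟩
    · obtain ⟨h1, h2, h3, -⟩ := h𝒦₀sub hK
      exact ⟨h1, h2, h3⟩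
  have hne : ∀ K ∈ ℋ, (K \ W).Nonempty := by
    intro K hK
    obtain ⟨hKf, hKr, hKW⟩ := hhyp K hK
    rw [nonempty_iff_ne_empty]
    intro h0
    have hKsubW : K ⊆ W := diff_eq_empty.mp h0
    have := mrk_mono hKsubW hW.subset_ground
    have := mrk_mono hKW hKf.subset_ground
    omega
  haveI hαne : Nonempty α := ⟨(hne H (mem_insert H 𝒦₀)).choose⟩
  set f : Set α → α := fun K => if h : (K \ W).Nonempty then h.choose else Classical.arbitrary α
    with hfdef
  have hfmem : ∀ K ∈ ℋ, f K ∈ K \ W := by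
    intro K hK
    simp only [hfdef, dif_pos (hne K hK)]
    exact (hne K hK).choose_spec
  have hfcl : ∀ K ∈ ℋ, K = M.closure (insert (f K) W) := by
    intro K hK
    obtain ⟨hKf, hKr, hKW⟩ := hhyp K hK
    exact hyp_unique hW hrW hKf hKr hKW (hfmem K hK).1 (hfmem K hK).2
  have hinj : InjOn f ℋ := fun K hK K' hK' heq => by
    rw [hfcl K hK, hfcl K' hK', heq]
  set S : Set α := f '' ℋ with hSdef
  have hScard : S.ncard = l + 2 := by rw [hSdef, ncard_image_of_injOn hinj, hℋcard]
  have hSsub : S ⊆ M.E \ W := by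
    rintro _ ⟨K, hK, rfl⟩
    exact ⟨(hhyp K hK).1.subset_ground (hfmem K hK).1, (hfmem K hK).2⟩
  have hSfin : S.Finite := (M.ground_finite.diff : (M.E \ W).Finite).subset hSsub
  refine hminor ⟨W, (M.E \ W) \ S, ?_⟩
  have hground : (mdelete (mcontract M W) ((M.E \ W) \ S)).E = S := by
    show (mcontract M W).E \ ((M.E \ W) \ S) = S
    rw [mcontract_ground, diff_diff_cancel_left hSsub]
  obtain ⟨J, hJ⟩ := M.exists_isBasis W hW.subset_ground
  have hindep_sing : ∀ x ∈ M.E \ W, M.Indep (insert x J) := by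
    intro x hx
    have hxJ : x ∉ J := fun h => hx.2 (hJ.subset h)
    rw [hJ.indep.insert_indep_iff_of_notMem hxJ, hJ.closure_eq_closure, hW.closure]
    exact ⟨hx.1, hx.2⟩
  refine ⟨by rw [hground]; exact hSfin, by rw [hground, hScard], ?_⟩
  intro I hI
  rw [hground] at hI
  have hIfin : I.Finite := hSfin.subset hI
  constructor
  · intro hind
    have hNind : (mcontract M W).Indep I := (restrict_indep_iff.mp hind).1
    have := mcontract_indep_bound hW.subset_ground hNind
    exact ⟨hIfin, by omega⟩
  · rintro ⟨-, hIcard⟩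
    have hNind : (mcontract M W).Indep I := by
      have hcases : I.ncard = 0 ∨ I.ncard = 1 ∨ I.ncard = 2 := by omega
      rcases hcases with h0 | h1 | h2
      · have hIemp : I = ∅ := (ncard_eq_zero hIfin).mp h0
        subst hIemp
        exact mcontract_indep hJ (empty_subset _) (empty_disjoint W)
          (by rw [union_empty]; exact hJ.indep)
      · obtain ⟨x, rfl⟩ := ncard_eq_one.mp h1
        have hxS : x ∈ S := hI rfl
        have hxEW : x ∈ M.E \ W := hSsub hxS
        refine mcontract_indep hJ (singleton_subset_iff.mpr hxEW.1)
          (disjoint_singleton_left.mpr hxEW.2) ?_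
        rw [union_singleton]
        exact hindep_sing x hxEW
      · obtain ⟨x, y, hxy, rfl⟩ := ncard_eq_two.mp h2
        obtain ⟨K₁, hK₁, hfx⟩ := hI (show x ∈ ({x, y} : Set α) from Or.inl rfl)
        obtain ⟨K₂, hK₂, hfy⟩ := hI (show y ∈ ({x, y} : Set α) from Or.inr rfl)
        have hxEW : x ∈ M.E \ W := hSsub (hI (Or.inl rfl))
        have hyEW : y ∈ M.E \ W := hSsub (hI (Or.inr rfl))
        have hK₁K₂ : K₁ ≠ K₂ := by
          rintro rfl
          exact hxy (hfx.symm.trans hfy)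
        have hyK₁ : y ∉ K₁ := by
          intro hmem
          have h2' := hyp_unique hW hrW (hhyp K₁ hK₁).1 (hhyp K₁ hK₁).2.1
            (hhyp K₁ hK₁).2.2 hmem hyEW.2
          have h3' : K₂ = M.closure (insert y W) := by rw [hfcl K₂ hK₂, hfy]
          exact hK₁K₂ (h2'.trans h3'.symm)
        have hindx : M.Indep (insert x J) := hindep_sing x hxEW
        have hclx : M.closure (insert x J) = K₁ := by
          have hstep : M.closure (insert x J) = M.closure (insert x W) := by
            rw [← closure_insert_closure_eq_closure_insert, hJ.closure_eq_closure,
              closure_insert_closure_eq_closure_insert]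
          rw [hstep, hfcl K₁ hK₁, hfx]
        have hyJx : y ∉ insert x J := by
          rintro (rfl | h)
          · exact hxy rfl
          · exact hyEW.2 (hJ.subset h)
        have hind2 : M.Indep (insert y (insert x J)) := by
          rw [hindx.insert_indep_iff_of_notMem hyJx, hclx]
          exact ⟨hyEW.1, hyK₁⟩
        have hdisj : Disjoint ({x, y} : Set α) W := by
          rw [disjoint_left]
          rintro z (rfl | rfl)
          · exact hxEW.2
          · exact hyEW.2
        refine mcontract_indep hJ ?_ hdisj ?_
        · rintro z (rfl | rfl)
          · exact hxEW.1
          · exact hyEW.1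
        · have : J ∪ {x, y} = insert y (insert x J) := by
            ext z
            simp only [mem_union, mem_insert_iff, mem_singleton_iff]
            tauto
          rw [this]
          exact hind2
    exact restrict_indep_iff.mpr ⟨hNind, by
      rw [mcontract_ground, diff_diff_cancel_left hSsub]; exact hI⟩

end Count

lemma ncard_biUnion_le' {β γ : Type*} {t : Set β} (htfin : t.Finite) {f : β → Set γ} {c : ℕ}
    (hc : ∀ K ∈ t, (f K).ncard ≤ c) : (⋃ K ∈ t, f K).ncard ≤ t.ncard * c := by
  refine Set.Finite.induction_on (motive := fun t _ => (∀ K ∈ t, (f K).ncard ≤ c) →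
      (⋃ K ∈ t, f K).ncard ≤ t.ncard * c) _ htfin (by simp) ?_ hc
  intro a s ha hs ih hc'
  rw [biUnion_insert, ncard_insert_of_notMem ha hs]
  calc (f a ∪ ⋃ K ∈ s, f K).ncard ≤ (f a).ncard + (⋃ K ∈ s, f K).ncard := ncard_union_le _ _
    _ ≤ c + s.ncard * c :=
      add_le_add (hc' a (mem_insert _ _)) (ih fun K hK => hc' K (mem_insert_of_mem _ hK))
    _ = (s.ncard + 1) * c := by ring

end Aux18

open Aux18

/-- The averaging step in the base case of the skew-flat density lemma. -/


theorem stmt18 {α : Type*} (M : Matroid α) [M.Finite] (q l : ℕ) (hq : 2 ≤ q) (hlq : q ≤ l)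
    (lam : ℝ) (hminor : ¬ HasLineMinor M (l + 2)) (e : α) (he : M.Indep {e})
    (A : Set α) (hE : M.E = A ∪ {e})
    (W : Set α) (hW : M.IsFlat W) (heW : e ∉ W) (hrW : mrk M W + 2 = mrank M)
    (H : Set α) (hH : M.IsFlat H) (hrH : mrk M H + 1 = mrank M) (hWH : W ⊆ H) (heH : e ∈ H)
    (hdenA : lam * (q : ℝ) ^ mrank M < (eps M A : ℝ))
    (hdenH : (eps M (A ∩ H) : ℝ) ≤ lam * (q : ℝ) ^ mrk M H) :
    ∃ H' : Set α, M.IsFlat H' ∧ mrk M H' + 1 = mrank M ∧ W ⊆ H' ∧ e ∉ H' ∧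
      lam / (l : ℝ) * ((q : ℝ) - 1) * (q : ℝ) ^ (mrank M - 1) < (eps M (A ∩ H') : ℝ) := by
  classical
  have hAE : A ⊆ M.E := by rw [hE]; exact subset_union_left
  set 𝒦 : Set (Set α) := {K | M.IsFlat K ∧ mrk M K + 1 = mrank M ∧ W ⊆ K ∧ K ≠ H} with h𝒦def
  have h𝒦fin : 𝒦.Finite :=
    M.ground_finite.finite_subsets.subset fun K hK => hK.1.subset_ground
  obtain ⟨x₀, hx₀⟩ : (M.E \ H).Nonempty := by
    rw [nonempty_iff_ne_empty]
    intro h0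
    have hEH : M.E ⊆ H := by rwa [diff_eq_empty] at h0
    have hHE : H = M.E := subset_antisymm hH.subset_ground hEH
    rw [hHE] at hrH
    unfold mrank at hrH
    omega
  have hx₀W : x₀ ∉ W := fun h => hx₀.2 (hWH h)
  obtain ⟨hK₀flat, hK₀rk, hK₀W, hK₀x⟩ := hyp_mk hW hrW hx₀.1 hx₀W
  have h𝒦ne : 𝒦.Nonempty :=
    ⟨M.closure (insert x₀ W), hK₀flat, hK₀rk, hK₀W, fun h => hx₀.2 (h ▸ hK₀x)⟩
  have heK : ∀ K ∈ 𝒦, e ∉ K := by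
    intro K hK heKmem
    have h1 := hyp_unique hW hrW hK.1 hK.2.1 hK.2.2.1 heKmem heW
    have h2 := hyp_unique hW hrW hH hrH hWH heH heW
    exact hK.2.2.2 (h1.trans h2.symm)
  obtain ⟨K₀, hK₀mem, hK₀max⟩ := Set.exists_max_image 𝒦 (fun K => eps M (A ∩ K)) h𝒦fin h𝒦ne
  set pts : Set α → Set (Set α) := fun X => {P | (M ↾ X).IsFlat P ∧ mrk (M ↾ X) P = 1}
    with hptsdef
  have hptsfin : ∀ X, X ⊆ M.E → (pts X).Finite := fun X hX =>
    M.ground_finite.finite_subsets.subset fun P hP => hP.1.subset_ground.trans hX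
  have hincl : pts A ⊆ pts (A ∩ H) ∪ ⋃ K ∈ 𝒦, pts (A ∩ K) := by
    intro P hP
    obtain ⟨x, hxA, hxind, rfl⟩ := point_exists hAE hP
    have hxE : x ∈ M.E := hxind.subset_ground rfl
    by_cases hxH : x ∈ H
    · left
      have hclH : M.closure {x} ⊆ H := by
        have := M.closure_subset_closure (singleton_subset_iff.mpr hxH)
        rwa [hH.closure] at this
      have heq : M.closure {x} ∩ A = M.closure {x} ∩ (A ∩ H) := by
        refine subset_antisymm ?_ ?_
        · rintro z ⟨h1, h2⟩; exact ⟨h1, h2, hclH h1⟩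
        · rintro z ⟨h1, h2, -⟩; exact ⟨h1, h2⟩
      rw [heq]
      exact point_mk (inter_subset_left.trans hAE) ⟨hxA, hxH⟩ hxind
    · right
      have hxW : x ∉ W := fun h => hxH (hWH h)
      obtain ⟨hf, hr, hsW, hsx⟩ := hyp_mk hW hrW hxE hxW
      have hKmem : M.closure (insert x W) ∈ 𝒦 := ⟨hf, hr, hsW, fun h => hxH (h ▸ hsx)⟩
      refine mem_biUnion hKmem ?_
      have hclK : M.closure {x} ⊆ M.closure (insert x W) := by
        have := M.closure_subset_closure (singleton_subset_iff.mpr hsx)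
        rwa [hf.closure] at this
      have heq : M.closure {x} ∩ A = M.closure {x} ∩ (A ∩ M.closure (insert x W)) := by
        refine subset_antisymm ?_ ?_
        · rintro z ⟨h1, h2⟩; exact ⟨h1, h2, hclK h1⟩
        · rintro z ⟨h1, h2, -⟩; exact ⟨h1, h2⟩
      rw [heq]
      exact point_mk (inter_subset_left.trans hAE) ⟨hxA, hsx⟩ hxind
  have hsum : eps M A ≤ eps M (A ∩ H) + 𝒦.ncard * eps M (A ∩ K₀) := by
    have hUfin : (pts (A ∩ H) ∪ ⋃ K ∈ 𝒦, pts (A ∩ K)).Finite :=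
      (hptsfin _ (inter_subset_left.trans hAE)).union
        (h𝒦fin.biUnion fun K _ => hptsfin _ (inter_subset_left.trans hAE))
    calc eps M A ≤ (pts (A ∩ H) ∪ ⋃ K ∈ 𝒦, pts (A ∩ K)).ncard := ncard_le_ncard hincl hUfin
      _ ≤ (pts (A ∩ H)).ncard + (⋃ K ∈ 𝒦, pts (A ∩ K)).ncard := ncard_union_le _ _
      _ ≤ (pts (A ∩ H)).ncard + 𝒦.ncard * eps M (A ∩ K₀) :=
        add_le_add_right (ncard_biUnion_le' h𝒦fin fun K hK => hK₀max K hK) _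
  obtain ⟨hK₀flat', hK₀rk', hK₀Wsub, hK₀neH⟩ := hK₀mem
  refine ⟨K₀, hK₀flat', hK₀rk', hK₀Wsub, heK K₀ ⟨hK₀flat', hK₀rk', hK₀Wsub, hK₀neH⟩, ?_⟩
  have hm1 : 0 < 𝒦.ncard := (ncard_pos h𝒦fin).mpr h𝒦ne
  have hml : 𝒦.ncard ≤ l := hyps_ncard_le hminor hW hrW hH hrH hWH
  have hexp : mrank M - 1 = mrk M H := by omega
  rw [hexp]
  have hlpos : (0 : ℝ) < (l : ℝ) := by
    have : 0 < l := by omega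
    exact_mod_cast this
  set X : ℝ := lam * (q : ℝ) ^ mrk M H with hXdef
  have e1 : lam * (q : ℝ) ^ mrank M = X * q := by
    rw [hXdef, ← hrH, pow_succ]; ring
  have hcast : (eps M A : ℝ) ≤ (eps M (A ∩ H) : ℝ) + (𝒦.ncard : ℝ) * (eps M (A ∩ K₀) : ℝ) := by
    exact_mod_cast hsum
  have hT : X * ((q : ℝ) - 1) < (𝒦.ncard : ℝ) * (eps M (A ∩ K₀) : ℝ) := by
    rw [e1] at hdenA
    nlinarith [hdenA, hcast, hdenH]
  have hmc : (𝒦.ncard : ℝ) * (eps M (A ∩ K₀) : ℝ) ≤ (l : ℝ) * (eps M (A ∩ K₀) : ℝ) := by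
    have h1 : (𝒦.ncard : ℝ) ≤ (l : ℝ) := by exact_mod_cast hml
    have h2 : (0 : ℝ) ≤ (eps M (A ∩ K₀) : ℝ) := Nat.cast_nonneg _
    exact mul_le_mul_of_nonneg_right h1 h2
  have hfinal : X * ((q : ℝ) - 1) < (l : ℝ) * (eps M (A ∩ K₀) : ℝ) := lt_of_lt_of_le hT hmc
  have hgoal : lam / (l : ℝ) * ((q : ℝ) - 1) * (q : ℝ) ^ mrk M H
      = X * ((q : ℝ) - 1) / l := by rw [hXdef]; ring
  rw [hgoal, div_lt_iff₀ hlpos]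
  linarith [hfinal]
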